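/- Let h', h'' be i.i.d. Exp(1) random variables and I ≥ 0 a nonnegative random variable independent of (h',h''). For 0 ≤ θ < 1, P(max(h',h'')/(I + min(h',h'')) > θ) = (2/(1+θ))·E[exp(−θI)] − ((1−θ)/(1+θ))·E[exp(−(2θ/(1−θ))I)]. -/

import Mathlib

open MeasureTheory ProbabilityTheory Real

open scoped ENNReal

section RRSAux

open Set Filter

instance : IsProbabilityMeasure (expMeasure 1) := isProbabilityMeasure_expMeasure one_pos

lemma expM_Iic {u : ℝ} (hu : 0 ≤ u) :
    expMeasure 1 (Set.Iic u) = ENNReal.ofReal (1 - Real.exp (-u)) := by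
  rw [show expMeasure 1 = volume.withDensity (exponentialPDF 1) from rfl,
    withDensity_apply _ measurableSet_Iic,
    lintegral_exponentialPDF_eq_antiDeriv one_pos u, if_pos hu, one_mul]

lemma expM_Ioi {u : ℝ} (hu : 0 ≤ u) :
    expMeasure 1 (Set.Ioi u) = ENNReal.ofReal (Real.exp (-u)) := by
  have h2 := measure_compl (μ := expMeasure 1) measurableSet_Iic (measure_ne_top _ (Set.Iic u))
  rw [Set.compl_Iic] at h2
  have he : Real.exp (-u) ≤ 1 := Real.exp_le_one_iff.2 (by linarith)
  rw [h2, measure_univ, expM_Iic hu, ← ENNReal.ofReal_one,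
    ← ENNReal.ofReal_sub _ (by linarith)]
  norm_num

lemma expM_ae_nonneg : ∀ᵐ a ∂(expMeasure 1), 0 ≤ a := by
  rw [ae_iff]
  have : {a : ℝ | ¬ 0 ≤ a} = Set.Iio 0 := by ext a; simp [not_le]
  rw [this, show expMeasure 1 = volume.withDensity (exponentialPDF 1) from rfl,
    withDensity_apply _ measurableSet_Iio]
  exact lintegral_exponentialPDF_of_nonpos le_rfl

lemma step2 (θ x : ℝ) (hθp : 0 < θ) (hθ1 : θ < 1) (hx : 0 ≤ x) :
    (expMeasure 1).prod (expMeasure 1) {p : ℝ × ℝ | p.1 < p.2 ∧ θ * (x + p.1) < p.2} =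
    ENNReal.ofReal (∫ a : ℝ, (if 0 ≤ a then Real.exp (-a) * Real.exp (-(max a (θ * (x + a)))) else 0)) := by
  have h1θ : (0:ℝ) < 1 - θ := by linarith
  have hTm : MeasurableSet {p : ℝ × ℝ | p.1 < p.2 ∧ θ * (x + p.1) < p.2} := by
    apply MeasurableSet.inter
    · exact measurableSet_lt measurable_fst measurable_snd
    · exact measurableSet_lt (by measurability) measurable_snd
  rw [Measure.prod_apply hTm]
  have hpre : ∀ a : ℝ, (Prod.mk a ⁻¹' {p : ℝ × ℝ | p.1 < p.2 ∧ θ * (x + p.1) < p.2})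
      = Set.Ioi (max a (θ * (x + a))) := by
    intro a; ext b
    simp [Set.mem_Ioi, max_lt_iff, and_comm]
  simp only [hpre]
  -- a.e. rewrite of survival function
  have hmax : Measurable fun a : ℝ => max a (θ * (x + a)) :=
    measurable_id.max ((measurable_id.const_add x).const_mul θ)
  have hgm : Measurable fun a : ℝ => ENNReal.ofReal (Real.exp (-(max a (θ * (x + a))))) :=
    (Real.measurable_exp.comp hmax.neg).ennreal_ofReal
  have hcong : ∫⁻ a, expMeasure 1 (Set.Ioi (max a (θ * (x + a)))) ∂(expMeasure 1)
      = ∫⁻ a, ENNReal.ofReal (Real.exp (-(max a (θ * (x + a))))) ∂(expMeasure 1) := by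
    apply lintegral_congr_ae
    filter_upwards [expM_ae_nonneg] with a ha
    exact expM_Ioi (le_trans ha (le_max_left _ _))
  rw [hcong]
  have hpdfm : Measurable (exponentialPDF 1) := (measurable_exponentialPDFReal 1).ennreal_ofReal
  rw [show expMeasure 1 = volume.withDensity (exponentialPDF 1) from rfl,
    lintegral_withDensity_eq_lintegral_mul _ hpdfm hgm]
  have hptwise : ∀ a : ℝ, (exponentialPDF 1 * fun a => ENNReal.ofReal (Real.exp (-(max a (θ * (x + a)))))) a
      = ENNReal.ofReal (if 0 ≤ a then Real.exp (-a) * Real.exp (-(max a (θ * (x + a)))) else 0) := by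
    intro a
    simp only [Pi.mul_apply, exponentialPDF_eq, one_mul]
    split_ifs with h
    · rw [← ENNReal.ofReal_mul (le_of_lt (Real.exp_pos _))]
    · simp
  rw [lintegral_congr hptwise]
  rw [← MeasureTheory.ofReal_integral_eq_lintegral_ofReal]
  · -- integrable
    have hmF : Measurable fun a : ℝ => (if 0 ≤ a then Real.exp (-a) * Real.exp (-(max a (θ * (x + a)))) else 0) := by
      apply Measurable.ite measurableSet_Ici _ measurable_const
      exact (Real.measurable_exp.comp measurable_neg).mul (Real.measurable_exp.comp hmax.neg)
    have hmaj : Integrable (Set.indicator (Set.Ici (0:ℝ)) fun a => Real.exp (-a)) := by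
      apply MeasureTheory.IntegrableOn.integrable_indicator _ measurableSet_Ici
      rw [integrableOn_Ici_iff_integrableOn_Ioi]
      exact (exp_neg_integrableOn_Ioi 0 one_pos).congr_fun (fun a _ => by norm_num) measurableSet_Ioi
    apply Integrable.mono' hmaj hmF.aestronglyMeasurable
    filter_upwards with a
    rw [Set.indicator_apply]
    split_ifs with h h2 h2
    · rw [Real.norm_eq_abs, abs_of_nonneg (by positivity)]
      have : Real.exp (-(max a (θ * (x + a)))) ≤ 1 := by
        rw [Real.exp_le_one_iff]
        simp only [neg_nonpos]
        exact le_trans h (le_max_left _ _)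
      nlinarith [Real.exp_pos (-a), Real.exp_pos (-(max a (θ * (x + a))))]
    · exact absurd h h2
    · exact absurd h2 h
    · simp
  · filter_upwards with a
    split_ifs with h
    · positivity
    · exact le_rfl

lemma step1 (θ x : ℝ) :
    (expMeasure 1).prod (expMeasure 1) {p : ℝ × ℝ | max p.1 p.2 > θ * (x + min p.1 p.2)} =
    2 * (expMeasure 1).prod (expMeasure 1) {p : ℝ × ℝ | p.1 < p.2 ∧ θ * (x + p.1) < p.2} := by
  set μ2 := (expMeasure 1).prod (expMeasure 1)
  set T : Set (ℝ × ℝ) := {p : ℝ × ℝ | p.1 < p.2 ∧ θ * (x + p.1) < p.2} with hT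
  set E : Set (ℝ × ℝ) := {p : ℝ × ℝ | max p.1 p.2 > θ * (x + min p.1 p.2)} with hE
  have hTm : MeasurableSet T := by
    apply MeasurableSet.inter
    · exact measurableSet_lt measurable_fst measurable_snd
    · exact measurableSet_lt (by measurability) measurable_snd
  have hdiag : μ2 {p : ℝ × ℝ | p.1 = p.2} = 0 := by
    rw [Measure.prod_apply (measurableSet_eq_fun measurable_fst measurable_snd)]
    have h : ∀ a : ℝ, (Prod.mk a ⁻¹' {p : ℝ × ℝ | p.1 = p.2}) = {a} := by
      intro a; ext b; simp [eq_comm]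
    have h2 : ∀ a, expMeasure 1 {a} = 0 := by
      intro a
      rw [show expMeasure 1 = volume.withDensity (exponentialPDF 1) from rfl,
        withDensity_apply _ (measurableSet_singleton a),
        setLIntegral_measure_zero _ _ (Real.volume_singleton)]
    simp only [h, h2]; simp
  have hsplit : E = (T ∪ Prod.swap ⁻¹' T) ∪ (E ∩ {p : ℝ × ℝ | p.1 = p.2}) := by
    ext p
    simp only [Set.mem_union, Set.mem_inter_iff, Set.mem_preimage, hE, hT, Set.mem_setOf_eq,
      Prod.fst_swap, Prod.snd_swap]
    rcases lt_trichotomy p.1 p.2 with h | h | h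
    · rw [max_eq_right h.le, min_eq_left h.le]
      constructor
      · intro hp; exact Or.inl (Or.inl ⟨h, hp⟩)
      · rintro ((⟨_, hp⟩ | ⟨h2, _⟩) | ⟨hp, _⟩)
        · exact hp
        · exact absurd h (not_lt.2 h2.le)
        · exact hp
    · constructor
      · intro hp; exact Or.inr ⟨hp, h⟩
      · rintro ((⟨h1, _⟩ | ⟨h1, _⟩) | ⟨hp, _⟩)
        · exact absurd h1 (by rw [h]; exact lt_irrefl _)
        · exact absurd h1 (by rw [h]; exact lt_irrefl _)
        · exact hp
    · rw [max_eq_left h.le, min_eq_right h.le]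
      constructor
      · intro hp; exact Or.inl (Or.inr ⟨h, hp⟩)
      · rintro ((⟨h2, _⟩ | ⟨_, hp⟩) | ⟨hp, _⟩)
        · exact absurd h (not_lt.2 h2.le)
        · exact hp
        · exact hp
  have hswap : μ2 (Prod.swap ⁻¹' T) = μ2 T := by
    rw [← Measure.map_apply measurable_swap hTm, Measure.prod_swap]
  have hdisj : Disjoint T (Prod.swap ⁻¹' T) := by
    apply Set.disjoint_left.2
    rintro p ⟨h1, _⟩ ⟨h2, _⟩
    exact absurd h1 (not_lt.2 h2.le)
  calc μ2 E = μ2 (T ∪ Prod.swap ⁻¹' T) := by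
        rw [hsplit]
        refine le_antisymm ?_ (measure_mono Set.subset_union_left)
        refine (measure_union_le _ _).trans ?_
        rw [measure_mono_null Set.inter_subset_right hdiag, add_zero]
    _ = μ2 T + μ2 (Prod.swap ⁻¹' T) := measure_union hdisj (measurable_swap hTm)
    _ = 2 * μ2 T := by rw [hswap, two_mul]

lemma hasDerivAt_aux (b a : ℝ) (hb : b ≠ 0) :
    HasDerivAt (fun y : ℝ => -Real.exp (-b * y) / b) (Real.exp (-b * a)) a := by
  have h1 : HasDerivAt (fun y : ℝ => -b * y) (-b) a := by
    simpa using ((hasDerivAt_id a).const_mul (-b))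
  have h2 := (h1.exp).neg.div_const b
  refine h2.congr_deriv ?_
  field_simp

lemma tendsto_aux {b : ℝ} (hb : 0 < b) :
    Filter.Tendsto (fun y : ℝ => -Real.exp (-b * y) / b) Filter.atTop (nhds 0) := by
  have h1 : Filter.Tendsto (fun y : ℝ => -b * y) Filter.atTop Filter.atBot := by
    have := Filter.tendsto_neg_atTop_atBot.comp (Filter.Tendsto.const_mul_atTop hb (Filter.tendsto_id (α := ℝ)))
    refine this.congr fun y => by simp [neg_mul]
  have h2 := (Real.tendsto_exp_atBot.comp h1).neg.div_const b
  simpa using h2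

lemma integral_exp_neg_mul_Ioi {b : ℝ} (c : ℝ) (hb : 0 < b) :
    ∫ a in Set.Ioi c, Real.exp (-b * a) = Real.exp (-b * c) / b := by
  have key := integral_Ioi_of_hasDerivAt_of_tendsto (f := fun y : ℝ => -Real.exp (-b * y) / b)
    (f' := fun y : ℝ => Real.exp (-b * y)) (a := c) (m := 0)
    (hasDerivAt_aux b c hb.ne').continuousAt.continuousWithinAt
    (fun x _ => hasDerivAt_aux b x hb.ne')
    (exp_neg_integrableOn_Ioi c hb) (tendsto_aux hb)
  rw [key]; ring

lemma integral_exp_neg_mul_Ioc {b c : ℝ} (hb : 0 < b) (hc : 0 ≤ c) :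
    ∫ a in Set.Ioc 0 c, Real.exp (-b * a) = (1 - Real.exp (-b * c)) / b := by
  rw [← intervalIntegral.integral_of_le hc]
  rw [intervalIntegral.integral_eq_sub_of_hasDerivAt
    (fun x _ => hasDerivAt_aux b x hb.ne') ?_]
  · simp [neg_div]; ring
  · apply Continuous.intervalIntegrable
    continuity

lemma step3 (θ x : ℝ) (hθp : 0 < θ) (hθ1 : θ < 1) (hx : 0 ≤ x) :
    ∫ a : ℝ, (if 0 ≤ a then Real.exp (-a) * Real.exp (-(max a (θ * (x + a)))) else 0)
    = Real.exp (-θ * x) * ((1 - Real.exp (-(1+θ) * (θ*x/(1-θ))))/(1+θ))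
      + Real.exp (-2 * (θ*x/(1-θ))) / 2 := by
  have h1θ : (0:ℝ) < 1 - θ := by linarith
  have h1pθ : (0:ℝ) < 1 + θ := by linarith
  set c : ℝ := θ * x / (1 - θ) with hcdef
  have hc : 0 ≤ c := div_nonneg (mul_nonneg hθp.le hx) h1θ.le
  have hcmul : c * (1 - θ) = θ * x := div_mul_cancel₀ _ h1θ.ne'
  set f : ℝ → ℝ := fun a => Real.exp (-a) * Real.exp (-(max a (θ * (x + a)))) with hf
  have hfc : Continuous f := by
    apply Continuous.mul
    · exact Real.continuous_exp.comp continuous_neg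
    · exact Real.continuous_exp.comp (Continuous.neg (continuous_id.max (by continuity)))
  have hind : (fun a : ℝ => if 0 ≤ a then f a else 0) = Set.indicator (Set.Ici 0) f := by
    funext a; simp [Set.indicator_apply, Set.mem_Ici]
  rw [hind, integral_indicator measurableSet_Ici, integral_Ici_eq_integral_Ioi,
    ← Set.Ioc_union_Ioi_eq_Ioi hc]
  -- EqOn facts
  have heq1 : Set.EqOn f (fun a => Real.exp (-θ * x) * Real.exp (-(1+θ) * a)) (Set.Ioc 0 c) := by
    intro a ha
    have hle : a ≤ θ * (x + a) := by nlinarith [ha.2]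
    simp only [hf, max_eq_right hle]
    rw [← Real.exp_add, ← Real.exp_add]
    congr 1; ring
  have heq2 : Set.EqOn f (fun a => Real.exp (-2 * a)) (Set.Ioi c) := by
    intro a ha
    have hle : θ * (x + a) ≤ a := by
      have : c ≤ a := le_of_lt ha
      nlinarith
    simp only [hf, max_eq_left hle]
    rw [← Real.exp_add]
    congr 1; ring
  have hint2 : IntegrableOn f (Set.Ioi c) :=
    (exp_neg_integrableOn_Ioi c two_pos).congr_fun (fun a ha => (heq2 ha).symm) measurableSet_Ioi
  rw [setIntegral_union (Set.Ioc_disjoint_Ioi le_rfl) measurableSet_Ioi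
    (hfc.integrableOn_Ioc) hint2]
  rw [setIntegral_congr_fun measurableSet_Ioc heq1,
    setIntegral_congr_fun measurableSet_Ioi heq2]
  rw [MeasureTheory.integral_const_mul, integral_exp_neg_mul_Ioc h1pθ hc,
    integral_exp_neg_mul_Ioi c two_pos]

lemma slice' (θ x : ℝ) (hθ0 : 0 ≤ θ) (hθ1 : θ < 1) (hx : 0 ≤ x) :
    (expMeasure 1).prod (expMeasure 1) {p : ℝ × ℝ | max p.1 p.2 > θ * (x + min p.1 p.2)}
    = ENNReal.ofReal (2 / (1 + θ) * Real.exp (-θ * x)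
        - (1 - θ) / (1 + θ) * Real.exp (-(2 * θ / (1 - θ)) * x)) := by
  have h1θ : (0:ℝ) < 1 - θ := by linarith
  have h1pθ : (0:ℝ) < 1 + θ := by linarith
  rcases eq_or_lt_of_le hθ0 with hz | hθp
  · -- θ = 0
    subst hz
    have hEm : MeasurableSet {p : ℝ × ℝ | max p.1 p.2 > (0:ℝ) * (x + min p.1 p.2)} :=
      measurableSet_lt (by measurability) (measurable_fst.max measurable_snd)
    have hsub : {p : ℝ × ℝ | max p.1 p.2 > (0:ℝ) * (x + min p.1 p.2)}ᶜ
        ⊆ Set.Iic (0:ℝ) ×ˢ (Set.univ : Set ℝ) := by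
      intro p hp
      simp only [Set.mem_compl_iff, Set.mem_setOf_eq, not_lt, zero_mul] at hp
      exact ⟨le_trans (le_max_left _ _) hp, Set.mem_univ _⟩
    have h0 : (expMeasure 1).prod (expMeasure 1) (Set.Iic (0:ℝ) ×ˢ (Set.univ : Set ℝ)) = 0 := by
      rw [Measure.prod_prod, expM_Iic le_rfl]
      simp
    have hcompl : (expMeasure 1).prod (expMeasure 1)
        {p : ℝ × ℝ | max p.1 p.2 > (0:ℝ) * (x + min p.1 p.2)}ᶜ = 0 :=
      measure_mono_null hsub h0
    have := measure_add_measure_compl (μ := (expMeasure 1).prod (expMeasure 1)) hEm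
    rw [hcompl, add_zero, measure_univ] at this
    rw [this]
    norm_num
  · -- 0 < θ
    rw [step1, step2 θ x hθp hθ1 hx, step3 θ x hθp hθ1 hx]
    set q := Real.exp (-(1+θ) * (θ*x/(1-θ))) with hq
    set E1 := Real.exp (-θ * x) with hE1
    set E2 := Real.exp (-(2 * θ / (1 - θ)) * x) with hE2
    have idA : E1 * q = E2 := by
      rw [hE1, hq, hE2, ← Real.exp_add]
      congr 1
      field_simp
      ring
    have idB : Real.exp (-2 * (θ*x/(1-θ))) = E2 := by
      rw [hE2]; congr 1; field_simp
    have hq1 : q ≤ 1 := by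
      rw [hq, Real.exp_le_one_iff]
      have : 0 ≤ θ * x / (1 - θ) := div_nonneg (mul_nonneg hθp.le hx) h1θ.le
      nlinarith
    have hJ : 0 ≤ E1 * ((1 - q)/(1+θ)) + E2 / 2 := by
      have := Real.exp_pos (-θ * x)
      have := Real.exp_pos (-(2 * θ / (1 - θ)) * x)
      rw [← hE1, ← hE2] at *
      have h1 : 0 ≤ (1 - q)/(1+θ) := div_nonneg (by linarith) h1pθ.le
      positivity
    rw [idB, (by norm_num : (2:ℝ≥0∞) = ENNReal.ofReal (2:ℝ)),
      ← ENNReal.ofReal_mul (by norm_num)]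
    congr 1
    rw [← idA]
    field_simp
    ring

end RRSAux

section RRSAux2
open Set Filter

/-- Success probability of the first decoded MTD under RRS for `0 ≤ θ < 1`. -/
theorem rrs_success_first_small_theta {Ω : Type*} [MeasureSpace Ω]
    [IsProbabilityMeasure (ℙ : Measure Ω)]
    (h' h'' I : Ω → ℝ) (hm' : Measurable h') (hm'' : Measurable h'')
    (hmI : Measurable I)
    (hind12 : IndepFun h' h'' ℙ)
    (hindI : IndepFun (fun ω => (h' ω, h'' ω)) I ℙ)
    (hd' : Measure.map h' ℙ = expMeasure 1)
    (hd'' : Measure.map h'' ℙ = expMeasure 1)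
    (hIpos : ∀ᵐ ω ∂ℙ, 0 ≤ I ω)
    (θ : ℝ) (hθ0 : 0 ≤ θ) (hθ1 : θ < 1) :
    (ℙ {ω | max (h' ω) (h'' ω) > θ * (I ω + min (h' ω) (h'' ω))}).toReal =
      (2 / (1 + θ)) * (∫ ω, Real.exp (-θ * I ω) ∂ℙ) -
        ((1 - θ) / (1 + θ)) * ∫ ω, Real.exp (-(2 * θ / (1 - θ)) * I ω) ∂ℙ := by
  have h1θ : (0:ℝ) < 1 - θ := by linarith
  have h1pθ : (0:ℝ) < 1 + θ := by linarith
  have hb2 : 0 ≤ 2 * θ / (1 - θ) := by positivity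
  set ν : Measure ℝ := Measure.map I ℙ with hν
  haveI : IsProbabilityMeasure ν := Measure.isProbabilityMeasure_map hmI.aemeasurable
  set μ2 : Measure (ℝ × ℝ) := (expMeasure 1).prod (expMeasure 1) with hμ2
  -- measurability of the event set
  set E : Set ((ℝ × ℝ) × ℝ) := {p | max p.1.1 p.1.2 > θ * (p.2 + min p.1.1 p.1.2)} with hE
  have hEm : MeasurableSet E := by
    apply measurableSet_lt
    · exact (measurable_snd.add ((measurable_fst.fst).min (measurable_fst.snd))).const_mul θ
    · exact (measurable_fst.fst).max (measurable_fst.snd)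
  have hFm : Measurable fun ω => ((h' ω, h'' ω), I ω) := (hm'.prodMk hm'').prodMk hmI
  -- law identification
  have hlaw : Measure.map (fun ω => ((h' ω, h'' ω), I ω)) ℙ = μ2.prod ν := by
    rw [(indepFun_iff_map_prod_eq_prod_map_map (hm'.prodMk hm'').aemeasurable
      hmI.aemeasurable).mp hindI]
    congr 1
    rw [(indepFun_iff_map_prod_eq_prod_map_map hm'.aemeasurable hm''.aemeasurable).mp hind12,
      hd', hd'']
  -- event probability through the law
  have hev : ℙ {ω | max (h' ω) (h'' ω) > θ * (I ω + min (h' ω) (h'' ω))} = (μ2.prod ν) E := by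
    rw [← hlaw, Measure.map_apply hFm hEm]
    rfl
  -- ν-a.e. nonneg
  have hν0 : ∀ᵐ x ∂ν, 0 ≤ x :=
    (ae_map_iff hmI.aemeasurable measurableSet_Ici).2 hIpos
  -- slice
  have hBB : (μ2.prod ν) E = ∫⁻ x, μ2 {p : ℝ × ℝ | max p.1 p.2 > θ * (x + min p.1 p.2)} ∂ν := by
    rw [Measure.prod_apply_symm hEm]
    rfl
  set g : ℝ → ℝ := fun x => 2 / (1 + θ) * Real.exp (-θ * x)
    - (1 - θ) / (1 + θ) * Real.exp (-(2 * θ / (1 - θ)) * x) with hg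
  have hCC : ∫⁻ x, μ2 {p : ℝ × ℝ | max p.1 p.2 > θ * (x + min p.1 p.2)} ∂ν
      = ∫⁻ x, ENNReal.ofReal (g x) ∂ν := by
    apply lintegral_congr_ae
    filter_upwards [hν0] with x hx
    exact slice' θ x hθ0 hθ1 hx
  -- integrability
  have hcont1 : Continuous fun x : ℝ => Real.exp (-θ * x) := by continuity
  have hcont2 : Continuous fun x : ℝ => Real.exp (-(2 * θ / (1 - θ)) * x) := by continuity
  have hint1 : Integrable (fun x => Real.exp (-θ * x)) ν := by
    refine Integrable.mono' (integrable_const 1) hcont1.aestronglyMeasurable ?_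
    filter_upwards [hν0] with x hx
    rw [Real.norm_eq_abs, abs_of_nonneg (Real.exp_pos _).le, Real.exp_le_one_iff]
    nlinarith
  have hint2 : Integrable (fun x => Real.exp (-(2 * θ / (1 - θ)) * x)) ν := by
    refine Integrable.mono' (integrable_const 1) hcont2.aestronglyMeasurable ?_
    filter_upwards [hν0] with x hx
    rw [Real.norm_eq_abs, abs_of_nonneg (Real.exp_pos _).le, Real.exp_le_one_iff]
    nlinarith
  have hgint : Integrable g ν := ((hint1.const_mul _).sub (hint2.const_mul _))
  have hg0 : 0 ≤ᵐ[ν] g := by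
    filter_upwards [hν0] with x hx
    have hmono : Real.exp (-(2 * θ / (1 - θ)) * x) ≤ Real.exp (-θ * x) := by
      apply Real.exp_le_exp.2
      rw [neg_mul, neg_mul, neg_le_neg_iff]
      apply mul_le_mul_of_nonneg_right _ hx
      rw [le_div_iff₀ h1θ]
      nlinarith
    have e2pos := Real.exp_pos (-(2 * θ / (1 - θ)) * x)
    have e1pos := Real.exp_pos (-θ * x)
    have hcoef : (1 - θ) / (1 + θ) ≤ 2 / (1 + θ) := by
      rw [div_le_div_iff_of_pos_right h1pθ]
      linarith
    have hc2 : 0 ≤ (1 - θ) / (1 + θ) := by positivity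
    have hkey : (1 - θ) / (1 + θ) * Real.exp (-(2 * θ / (1 - θ)) * x)
        ≤ 2 / (1 + θ) * Real.exp (-θ * x) :=
      le_trans (mul_le_mul_of_nonneg_left hmono hc2)
        (mul_le_mul_of_nonneg_right hcoef e1pos.le)
    show (0:ℝ) ≤ g x
    rw [hg]
    dsimp only
    linarith
  have hDD : ∫⁻ x, ENNReal.ofReal (g x) ∂ν = ENNReal.ofReal (∫ x, g x ∂ν) :=
    (MeasureTheory.ofReal_integral_eq_lintegral_ofReal hgint hg0).symm
  rw [hev, hBB, hCC, hDD, ENNReal.toReal_ofReal (integral_nonneg_of_ae hg0)]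
  rw [hg]
  rw [integral_sub (hint1.const_mul _) (hint2.const_mul _), integral_const_mul, integral_const_mul]
  rw [hν, integral_map hmI.aemeasurable hcont1.aestronglyMeasurable,
    integral_map hmI.aemeasurable hcont2.aestronglyMeasurable]
end RRSAux2
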